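/- arXiv:2411.01845 — 4 statements merged into one kernel-verified Lean document; each statement's English description precedes it below -/
import Mathlib

section
/- Let ρ = β + iγ be a complex number with β > 0, and let x, y be real numbers with 0 < y ≤ x/2. Then | (x^ρ − (x−y)^ρ)/ρ | ≤ 2 y x^{β − 1}, where z^ρ denotes the principal complex power of a positive real number z. -/
open Complex Filter Asymptotics Set

open Classical in
/-- Multiplicity of a zero of the Riemann zeta function (the order of vanishing). -/
noncomputable def zetaZeroMult (ρ : ℂ) : ℕ :=
  if h : AnalyticAt ℂ riemannZeta ρ then (analyticOrderAt riemannZeta ρ).toNat else 0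

/-- `zetaN σ T`: the number of zeros of the Riemann zeta function, counted with
multiplicity, in the rectangle `σ ≤ Re ρ ≤ 1`, `0 < Im ρ ≤ T`. -/
noncomputable def zetaN (σ T : ℝ) : ℕ :=
  ∑ᶠ ρ ∈ {ρ : ℂ | riemannZeta ρ = 0 ∧ σ ≤ ρ.re ∧ ρ.re ≤ 1 ∧ 0 < ρ.im ∧ ρ.im ≤ T},
    zetaZeroMult ρ

/-- The Dirichlet polynomial `∑_{M ≤ m < 2M} a m * m^{-s}`. -/
noncomputable def dPoly (a : ℕ → ℝ) (M : ℝ) (s : ℂ) : ℂ :=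
  ∑ᶠ m ∈ {m : ℕ | M ≤ (m : ℝ) ∧ (m : ℝ) < 2 * M}, (a m : ℂ) * (m : ℂ) ^ (-s)

/-- The prime-counting function of a real argument: the number of primes `≤ x`. -/
noncomputable def piR (x : ℝ) : ℝ := (Nat.primeCounting ⌊x⌋₊ : ℝ)

/-- The mean-value bound `|(x^ρ - (x-y)^ρ)/ρ| ≤ 2 y x^{β-1}` for `0 < y ≤ x/2`. -/
theorem stmt_12 (ρ : ℂ) (x y : ℝ) (hβ : 0 < ρ.re) (hy : 0 < y) (hyx : y ≤ x / 2) :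
    ‖((x : ℂ) ^ ρ - ((x - y : ℝ) : ℂ) ^ ρ) / ρ‖ ≤ 2 * y * x ^ (ρ.re - 1) := by
  have hρ : ρ ≠ 0 := fun h => by simp [h] at hβ
  have hx : 0 < x := by linarith
  have hxy : 0 < x - y := by linarith
  have hle : x - y ≤ x := by linarith
  have hr1 : ρ - 1 ≠ -1 := by
    intro h
    exact hρ (by have := sub_eq_iff_eq_add.mp h; simpa using this)
  have hderiv : ∀ t ∈ Set.uIcc (x - y) x,
      HasDerivAt (fun u : ℝ => (u : ℂ) ^ ρ / ρ) ((t : ℂ) ^ (ρ - 1)) t := by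
    intro t ht
    rw [Set.uIcc_of_le hle] at ht
    have ht0 : (0 : ℝ) < t := lt_of_lt_of_le hxy ht.1
    have := hasDerivAt_ofReal_cpow_const' ht0.ne' hr1
    simpa using this
  have hint : IntervalIntegrable (fun t : ℝ => (t : ℂ) ^ (ρ - 1)) MeasureTheory.volume (x - y) x := by
    apply ContinuousOn.intervalIntegrable
    intro t ht
    rw [Set.uIcc_of_le hle] at ht
    have ht0 : (0 : ℝ) < t := lt_of_lt_of_le hxy ht.1
    exact (Complex.continuousAt_ofReal_cpow_const t (ρ - 1) (Or.inr ht0.ne')).continuousWithinAt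
  have key : ∫ t in (x - y)..x, (t : ℂ) ^ (ρ - 1) =
      ((x : ℂ) ^ ρ - ((x - y : ℝ) : ℂ) ^ ρ) / ρ := by
    rw [intervalIntegral.integral_eq_sub_of_hasDerivAt hderiv hint]
    ring
  rw [← key]
  have hb : ∀ t ∈ Set.uIoc (x - y) x, ‖(t : ℂ) ^ (ρ - 1)‖ ≤ 2 * x ^ (ρ.re - 1) := by
    intro t ht
    rw [Set.uIoc_of_le hle] at ht
    have ht0 : (0 : ℝ) < t := lt_trans hxy ht.1
    rw [Complex.norm_cpow_eq_rpow_re_of_pos ht0]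
    have hre : (ρ - 1).re = ρ.re - 1 := by simp
    rw [hre]
    have hxp : (0 : ℝ) ≤ x ^ (ρ.re - 1) := Real.rpow_nonneg hx.le _
    rcases le_or_gt 1 ρ.re with h1 | h1
    · have : t ^ (ρ.re - 1) ≤ x ^ (ρ.re - 1) :=
        Real.rpow_le_rpow ht0.le ht.2 (by linarith)
      linarith
    · have h2 : x / 2 ≤ t := by linarith [ht.1]
      have h3 : t ^ (ρ.re - 1) ≤ (x / 2) ^ (ρ.re - 1) :=
        Real.rpow_le_rpow_of_nonpos (by linarith) h2 (by linarith)
      have h4 : (x / 2) ^ (ρ.re - 1) = x ^ (ρ.re - 1) / 2 ^ (ρ.re - 1) :=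
        Real.div_rpow hx.le (by norm_num) _
      have h5 : (2 : ℝ) ^ (-1 : ℝ) ≤ 2 ^ (ρ.re - 1) :=
        Real.rpow_le_rpow_of_exponent_le (by norm_num) (by linarith)
      rw [Real.rpow_neg_one] at h5
      have h6 : x ^ (ρ.re - 1) / 2 ^ (ρ.re - 1) ≤ x ^ (ρ.re - 1) / 2⁻¹ :=
        div_le_div_of_nonneg_left hxp (by norm_num) h5
      have h7 : x ^ (ρ.re - 1) / 2⁻¹ = 2 * x ^ (ρ.re - 1) := by ring
      linarith
  have := intervalIntegral.norm_integral_le_of_norm_le_const hb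
  calc ‖∫ t in (x - y)..x, (t : ℂ) ^ (ρ - 1)‖ ≤ 2 * x ^ (ρ.re - 1) * |x - (x - y)| := this
    _ = 2 * y * x ^ (ρ.re - 1) := by rw [_root_.abs_of_nonneg (by linarith)]; ring
end

section
/- Let x > 1 and let E, σ, u, v be real numbers with E > 0. Set M = x^u and N = x^v. If (1/2)·max(0, log_x E − u) + (1/2)·max(0, log_x E − v) ≤ (1 − u − v)(1 − σ), then M^{1/2 − σ} N^{1/2 − σ} (M + E)^{1/2} (N + E)^{1/2} ≤ 2 x^{1 − σ}. -/
open Complex Filter Asymptotics Set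

/-- The inequality on exponents implies the bound
`M^{1/2-σ} N^{1/2-σ} (M+E)^{1/2} (N+E)^{1/2} ≤ 2 x^{1-σ}`. -/
theorem stmt_13 (x E σ u v : ℝ) (hx : 1 < x) (hE : 0 < E)
    (h : 1 / 2 * max 0 (Real.logb x E - u) + 1 / 2 * max 0 (Real.logb x E - v)
      ≤ (1 - u - v) * (1 - σ)) :
    (x ^ u) ^ (1 / 2 - σ) * (x ^ v) ^ (1 / 2 - σ) *
      (x ^ u + E) ^ ((1 : ℝ) / 2) * (x ^ v + E) ^ ((1 : ℝ) / 2)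
      ≤ 2 * x ^ (1 - σ) := by
  have hx0 : (0:ℝ) < x := lt_trans one_pos hx
  set e := Real.logb x E with he
  have hEx : E = x ^ e := (Real.rpow_logb hx0 (ne_of_gt hx) hE).symm
  have key : ∀ w : ℝ, (x ^ w + E) ^ ((1:ℝ)/2) ≤ (2:ℝ) ^ ((1:ℝ)/2) * x ^ (max w e / 2) := by
    intro w
    have h1 : x ^ w + E ≤ 2 * x ^ (max w e) := by
      rw [hEx, two_mul]
      exact add_le_add (Real.rpow_le_rpow_of_exponent_le hx.le (le_max_left w e))
        (Real.rpow_le_rpow_of_exponent_le hx.le (le_max_right w e))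
    calc (x ^ w + E) ^ ((1:ℝ)/2) ≤ (2 * x ^ (max w e)) ^ ((1:ℝ)/2) :=
          Real.rpow_le_rpow (by positivity) h1 (by norm_num)
      _ = 2 ^ ((1:ℝ)/2) * x ^ (max w e / 2) := by
          rw [Real.mul_rpow (by norm_num) (by positivity), ← Real.rpow_mul hx0.le]
          ring_nf
  have hmu : max u e = u + max 0 (e - u) := by
    rcases le_total e u with h'|h'
    · rw [max_eq_left h', max_eq_left (by linarith)]; ring
    · rw [max_eq_right h', max_eq_right (by linarith)]; ring
  have hmv : max v e = v + max 0 (e - v) := by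
    rcases le_total e v with h'|h'
    · rw [max_eq_left h', max_eq_left (by linarith)]; ring
    · rw [max_eq_right h', max_eq_right (by linarith)]; ring
  have hexp : u * (1/2 - σ) + v * (1/2 - σ) + (max u e / 2 + max v e / 2) ≤ 1 - σ := by
    rw [hmu, hmv]; nlinarith [h]
  calc (x ^ u) ^ (1 / 2 - σ) * (x ^ v) ^ (1 / 2 - σ) *
      (x ^ u + E) ^ ((1 : ℝ) / 2) * (x ^ v + E) ^ ((1 : ℝ) / 2)
      ≤ x ^ (u * (1/2 - σ)) * x ^ (v * (1/2 - σ)) *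
        ((2:ℝ) ^ ((1:ℝ)/2) * x ^ (max u e / 2)) * ((2:ℝ) ^ ((1:ℝ)/2) * x ^ (max v e / 2)) := by
        rw [← Real.rpow_mul hx0.le, ← Real.rpow_mul hx0.le]
        exact mul_le_mul (mul_le_mul (le_refl _) (key u) (by positivity) (by positivity))
          (key v) (by positivity) (by positivity)
    _ = (2 ^ ((1:ℝ)/2) * 2 ^ ((1:ℝ)/2)) *
        x ^ (u * (1/2 - σ) + v * (1/2 - σ) + (max u e / 2 + max v e / 2)) := by
        rw [Real.rpow_add hx0, Real.rpow_add hx0, Real.rpow_add hx0]; ring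
    _ = 2 * x ^ (u * (1/2 - σ) + v * (1/2 - σ) + (max u e / 2 + max v e / 2)) := by
        rw [← Real.rpow_add (by norm_num : (0:ℝ) < 2)]; norm_num
    _ ≤ 2 * x ^ (1 - σ) := by
        have := Real.rpow_le_rpow_of_exponent_le hx.le hexp
        linarith
end

section
/- Let 1/2 ≤ θ < 1, 1/2 < σ₀ < 1, and let u, v ≥ 0 be real numbers satisfying (A1) (2σ₀ − 2θ)/(2σ₀ − 1) ≤ u + v ≤ 1, (A2) u(2 − 2σ₀) + v(1 − 2σ₀) ≤ θ + 1 − 2σ₀, and (A3) v(2 − 2σ₀) + u(1 − 2σ₀) ≤ θ + 1 − 2σ₀. Then for every σ with 0 ≤ σ ≤ σ₀, (1/2)·max(0, 1 − θ − u) + (1/2)·max(0, 1 − θ − v) ≤ (1 − u − v)(1 − σ). -/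
open Complex Filter Asymptotics Set

/-- Case 1 (`0 ≤ σ ≤ σ₀`) of the exponent inequality in Lemma 3.1. -/
theorem stmt_14 (θ σ₀ u v : ℝ)
    (hθ : 1 / 2 ≤ θ) (hθ1 : θ < 1) (hσ₀ : 1 / 2 < σ₀) (hσ₀1 : σ₀ < 1)
    (hu : 0 ≤ u) (hv : 0 ≤ v)
    (hA1l : (2 * σ₀ - 2 * θ) / (2 * σ₀ - 1) ≤ u + v) (hA1u : u + v ≤ 1)   -- (A1)
    (hA2 : u * (2 - 2 * σ₀) + v * (1 - 2 * σ₀) ≤ θ + 1 - 2 * σ₀)          -- (A2)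
    (hA3 : v * (2 - 2 * σ₀) + u * (1 - 2 * σ₀) ≤ θ + 1 - 2 * σ₀) :        -- (A3)
    ∀ σ : ℝ, 0 ≤ σ → σ ≤ σ₀ →
      1 / 2 * max 0 (1 - θ - u) + 1 / 2 * max 0 (1 - θ - v)
        ≤ (1 - u - v) * (1 - σ) := by
  intro σ hσ0 hσσ0
  have hs : 0 ≤ 1 - u - v := by linarith
  have h2 : 2 * σ₀ - 2 * θ ≤ (u + v) * (2 * σ₀ - 1) := by
    have := (div_le_iff₀ (by linarith : (0:ℝ) < 2 * σ₀ - 1)).mp hA1l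
    linarith
  have hmono : (1 - u - v) * (1 - σ₀) ≤ (1 - u - v) * (1 - σ) :=
    mul_le_mul_of_nonneg_left (by linarith) hs
  have key : 1 / 2 * max 0 (1 - θ - u) + 1 / 2 * max 0 (1 - θ - v)
      ≤ (1 - u - v) * (1 - σ₀) := by
    rcases le_total (1 - θ - u) 0 with h | h <;> rcases le_total (1 - θ - v) 0 with h' | h' <;>
      simp [max_eq_left, max_eq_right, h, h'] <;> nlinarith
  linarith
end

section
/- Let 1/2 ≤ θ < 1 and 1/2 < σ₀ < 1 with θ ≤ (3 − 2σ₀)/(7 − 6σ₀), and let A : [σ₀, 1] → ℝ be a non-negative, non-increasing function with A(σ₀) = 1/(2(1−σ₀)). Let u, v ≥ 0 be real numbers satisfying (A1) (2σ₀ − 2θ)/(2σ₀ − 1) ≤ u + v ≤ 1, (A2) u(2 − 2σ₀) + v(1 − 2σ₀) ≤ θ + 1 − 2σ₀, and (A3) v(2 − 2σ₀) + u(1 − 2σ₀) ≤ θ + 1 − 2σ₀. Then for every σ with σ₀ ≤ σ < 1, (1/2)·max(0, (1 − θ)(1/2 + A(σ)(1 − σ)) − u) + (1/2)·max(0, (1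 − θ)(1/2 + A(σ)(1 − σ)) − v) ≤ (1 − u − v)(1 − σ). -/
open Complex Filter Asymptotics Set

set_option maxHeartbeats 1600000 in
/-- Case 2 (`σ₀ ≤ σ < 1`) of the exponent inequality in Lemma 3.1. -/
theorem stmt_15 (θ σ₀ u v : ℝ) (A : ℝ → ℝ)
    (hθ : 1 / 2 ≤ θ) (hθ1 : θ < 1) (hσ₀ : 1 / 2 < σ₀) (hσ₀1 : σ₀ < 1)
    (hθ4 : θ ≤ (3 - 2 * σ₀) / (7 - 6 * σ₀))
    (hA_nonneg : ∀ σ : ℝ, σ₀ ≤ σ → σ ≤ 1 → 0 ≤ A σ)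
    (hA_anti : AntitoneOn A (Icc σ₀ 1))
    (hAσ₀ : A σ₀ = 1 / (2 * (1 - σ₀)))
    (hu : 0 ≤ u) (hv : 0 ≤ v)
    (hA1l : (2 * σ₀ - 2 * θ) / (2 * σ₀ - 1) ≤ u + v) (hA1u : u + v ≤ 1)   -- (A1)
    (hA2 : u * (2 - 2 * σ₀) + v * (1 - 2 * σ₀) ≤ θ + 1 - 2 * σ₀)          -- (A2)
    (hA3 : v * (2 - 2 * σ₀) + u * (1 - 2 * σ₀) ≤ θ + 1 - 2 * σ₀) :        -- (A3)
    ∀ σ : ℝ, σ₀ ≤ σ → σ < 1 →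
      1 / 2 * max 0 ((1 - θ) * (1 / 2 + A σ * (1 - σ)) - u)
        + 1 / 2 * max 0 ((1 - θ) * (1 / 2 + A σ * (1 - σ)) - v)
        ≤ (1 - u - v) * (1 - σ) := by
  intro σ hσ hσ1
  have h1 : (0:ℝ) < 2 * σ₀ - 1 := by linarith
  have h2 : (0:ℝ) < 7 - 6 * σ₀ := by linarith
  have hθ4' : θ * (7 - 6 * σ₀) ≤ 3 - 2 * σ₀ := (le_div_iff₀ h2).mp hθ4
  have hA1l' : 2 * σ₀ - 2 * θ ≤ (u + v) * (2 * σ₀ - 1) := (div_le_iff₀ h1).mp hA1l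
  have hkey : 3 - 2 * σ₀ - θ * (7 - 6 * σ₀) ≥ 0 := by linarith
  have hL0 : 1 - θ ≤ u + v := by
    nlinarith [mul_nonneg hkey (by linarith : (0:ℝ) ≤ 3 - 2 * σ₀),
      mul_nonneg (by linarith : (0:ℝ) ≤ 2 * σ₀ - 1) (by linarith : (0:ℝ) ≤ 1 - σ₀)]
  have hLu : 1 - θ ≤ 2 * u := by
    nlinarith [mul_nonneg (by linarith : (0:ℝ) ≤ 2 - 2 * σ₀)
      (by linarith : (0:ℝ) ≤ (u + v) * (2 * σ₀ - 1) - (2 * σ₀ - 2 * θ))]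
  have hLv : 1 - θ ≤ 2 * v := by
    nlinarith [mul_nonneg (by linarith : (0:ℝ) ≤ 2 - 2 * σ₀)
      (by linarith : (0:ℝ) ≤ (u + v) * (2 * σ₀ - 1) - (2 * σ₀ - 2 * θ))]
  have ht0 : (0:ℝ) < 1 - σ := by linarith
  have ht1 : 1 - σ ≤ 1 - σ₀ := by linarith
  have ha0 : 0 ≤ A σ := hA_nonneg σ hσ hσ1.le
  have haA : A σ ≤ 1 / (2 * (1 - σ₀)) := by
    have := hA_anti (Set.mem_Icc.mpr ⟨le_refl σ₀, hσ₀1.le⟩)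
      (Set.mem_Icc.mpr ⟨hσ, hσ1.le⟩) hσ
    rwa [hAσ₀] at this
  have haA' : A σ * (2 * (1 - σ₀)) ≤ 1 := by
    rw [le_div_iff₀ (by linarith : (0:ℝ) < 2 * (1 - σ₀))] at haA
    exact haA
  have hat : A σ * (1 - σ) * (2 * (1 - σ₀)) ≤ 1 - σ := by
    nlinarith [mul_le_mul_of_nonneg_right haA' ht0.le]
  have hat' : (1 - θ) * (A σ * (1 - σ)) * (2 * (1 - σ₀)) ≤ (1 - θ) * (1 - σ) := by
    nlinarith [mul_le_mul_of_nonneg_left hat (by linarith : (0:ℝ) ≤ 1 - θ)]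
  have hatn : 0 ≤ A σ * (1 - σ) := mul_nonneg ha0 ht0.le
  set E := (1 - θ) * (1 / 2 + A σ * (1 - σ)) with hE
  have hEb : E * (2 * (1 - σ₀)) ≤ (1 - θ) * (1 - σ₀) + (1 - θ) * (1 - σ) := by
    rw [hE]; linarith [hat']
  have hEb' : E * (2 * (1 - σ₀)) * (1 - σ₀)
      ≤ ((1 - θ) * (1 - σ₀) + (1 - θ) * (1 - σ)) * (1 - σ₀) :=
    mul_le_mul_of_nonneg_right hEb (by linarith)
  have hc : (0:ℝ) < 2 * (1 - σ₀) * (1 - σ₀) := by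
    have := mul_pos (show (0:ℝ) < 1 - σ₀ by linarith) (show (0:ℝ) < 1 - σ₀ by linarith)
    linarith
  rcases le_or_gt (E - u) 0 with hcu | hcu <;> rcases le_or_gt (E - v) 0 with hcv | hcv
  · rw [max_eq_left hcu, max_eq_left hcv]
    nlinarith
  · rw [max_eq_left hcu, max_eq_right hcv.le]
    have P1 : (0:ℝ) ≤ ((1 - σ₀) - (1 - σ)) * ((1 - σ₀) * (2 * v - (1 - θ))) :=
      mul_nonneg (by linarith) (mul_nonneg (by linarith) (by linarith))
    have P2 : (0:ℝ) ≤ (1 - σ) * ((1 - σ₀) *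
        ((θ + 1 - 2 * σ₀) - (u * (2 - 2 * σ₀) + v * (1 - 2 * σ₀)))) :=
      mul_nonneg (by linarith) (mul_nonneg (by linarith) (by linarith))
    have key : (E - v) * (2 * (1 - σ₀) * (1 - σ₀))
        ≤ 2 * (1 - u - v) * (1 - σ) * (2 * (1 - σ₀) * (1 - σ₀)) := by
      nlinarith [hEb', P1, P2]
    have : E - v ≤ 2 * (1 - u - v) * (1 - σ) := le_of_mul_le_mul_right key hc
    linarith
  · rw [max_eq_right hcu.le, max_eq_left hcv]
    have P1 : (0:ℝ) ≤ ((1 - σ₀) - (1 - σ)) * ((1 - σ₀) * (2 * u - (1 - θ))) :=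
      mul_nonneg (by linarith) (mul_nonneg (by linarith) (by linarith))
    have P2 : (0:ℝ) ≤ (1 - σ) * ((1 - σ₀) *
        ((θ + 1 - 2 * σ₀) - (v * (2 - 2 * σ₀) + u * (1 - 2 * σ₀)))) :=
      mul_nonneg (by linarith) (mul_nonneg (by linarith) (by linarith))
    have key : (E - u) * (2 * (1 - σ₀) * (1 - σ₀))
        ≤ 2 * (1 - u - v) * (1 - σ) * (2 * (1 - σ₀) * (1 - σ₀)) := by
      nlinarith [hEb', P1, P2]
    have : E - u ≤ 2 * (1 - u - v) * (1 - σ) := le_of_mul_le_mul_right key hc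
    linarith
  · rw [max_eq_right hcu.le, max_eq_right hcv.le]
    have P1 : (0:ℝ) ≤ ((1 - σ₀) - (1 - σ)) * ((1 - σ₀) * ((u + v) - (1 - θ))) :=
      mul_nonneg (by linarith) (mul_nonneg (by linarith) (by linarith))
    have P2 : (0:ℝ) ≤ (1 - σ) * ((1 - σ₀) *
        ((u + v) * (2 * σ₀ - 1) - (2 * σ₀ - 2 * θ))) :=
      mul_nonneg (by linarith) (mul_nonneg (by linarith) (by linarith))
    have key : (2 * E - (u + v)) * (2 * (1 - σ₀) * (1 - σ₀))
        ≤ 2 * (1 - u - v) * (1 - σ) * (2 * (1 - σ₀) * (1 - σ₀)) := by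
      nlinarith [hEb', P1, P2]
    have : 2 * E - (u + v) ≤ 2 * (1 - u - v) * (1 - σ) := le_of_mul_le_mul_right key hc
    linarith
end
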